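/- Let R ≥ 1 and n₀ = s₀ + i₀. Then there exists T > 0 such that for every pair of continuous nonnegative functions (s, i) on [0,T] with s(0) = s₀, i(0) = i₀ and sup_{t ∈ [0,T]}(|s(t) − s₀| + |i(t) − i₀|) ≤ R, the solution (Ŝ, Î) of system (Ĉ) with data (s,i) and initial data (S₀, I₀) (which satisfies Ŝ, Î ≥ 0) has averages ŝ(t) = ⟨Ŝ(·,t)⟩ and î(t) = ⟨Î(·,t)⟩ satisfying ŝ(t) ≥ 0, î(t) ≥ 0, ŝ(0) = s₀, î(0) = i₀ and sup_{t ∈ [0,T]}(|ŝ(t) − s₀| + |î(t) − i₀|) ≤ R. -/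

import Mathlib

open Real Set

set_option maxHeartbeats 1000000

lemma aux_one_sided {f d : ℝ → ℝ} {T C : ℝ}
    (hf : ∀ t ∈ Icc (0:ℝ) T, HasDerivAt f (d t) t)
    (hd : ∀ t ∈ Icc (0:ℝ) T, d t ≤ C) :
    ∀ t ∈ Icc (0:ℝ) T, f t ≤ f 0 + C * t := by
  intro t ht
  have hT : (0:ℝ) ≤ T := le_trans ht.1 ht.2
  have hmono : MonotoneOn (fun u => f 0 + C * u - f u) (Icc (0:ℝ) T) := by
    apply monotoneOn_of_hasDerivWithinAt_nonneg (convex_Icc 0 T)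
      (f' := fun u => C - d u)
    · intro u hu
      have h1 : HasDerivAt (fun u : ℝ => f 0 + C * u - f u) (C - d u) u := by
        exact (by simpa using (((hasDerivAt_id u).const_mul C).const_add (f 0)).sub (hf u hu) :
          HasDerivAt ((fun x => f 0 + C * x) - f) (C - d u) u)
      exact h1.continuousAt.continuousWithinAt
    · intro u hu
      have hu' : u ∈ Icc (0:ℝ) T := interior_subset hu
      have h1 : HasDerivAt (fun u : ℝ => f 0 + C * u - f u) (C - d u) u := by
        exact (by simpa using (((hasDerivAt_id u).const_mul C).const_add (f 0)).sub (hf u hu') :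
          HasDerivAt ((fun x => f 0 + C * x) - f) (C - d u) u)
      exact h1.hasDerivWithinAt
    · intro u hu
      exact sub_nonneg.2 (hd u (interior_subset hu))
  have h0 := hmono (left_mem_Icc.2 hT) ht ht.1
  simp only [mul_zero, add_zero] at h0
  linarith

theorem phi_maps_E_into_E
    (xmax m μ β₀ DS DI : ℝ) (p : ℝ → ℝ)
    (hxmax : 0 < xmax) (hm : 0 < m) (hμ : 0 < μ) (hβ₀ : 0 < β₀)
    (hDS : 0 < DS) (hDI : 0 < DI)
    (hp_nonneg : ∀ x ∈ Icc (0:ℝ) xmax, 0 ≤ p x) (hp0 : p 0 = 0)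
    (hp_int : ∫ x in (0:ℝ)..xmax, p x = 1)
    (hm_def : m = ∫ x in (0:ℝ)..xmax, x * p x)
    (S₀ I₀ : ℝ → ℝ)
    (hS₀ : ContDiff ℝ 1 S₀) (hI₀ : ContDiff ℝ 1 I₀)
    (hS₀nonneg : ∀ x ∈ Icc (0:ℝ) xmax, 0 ≤ S₀ x)
    (hI₀nonneg : ∀ x ∈ Icc (0:ℝ) xmax, 0 ≤ I₀ x)
    (hS₀zero : S₀ 0 = 0) (hI₀zero : I₀ 0 = 0)
    (s₀ i₀ : ℝ)
    (hs₀ : s₀ = ∫ x in (0:ℝ)..xmax, S₀ x * p x)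
    (hi₀ : i₀ = ∫ x in (0:ℝ)..xmax, I₀ x * p x)
    (hs₀pos : 0 < s₀) (hi₀pos : 0 < i₀)
    (R : ℝ) (hR : 1 ≤ R) :
    ∃ T > (0:ℝ), ∀ s i : ℝ → ℝ,
      ContinuousOn s (Icc 0 T) → ContinuousOn i (Icc 0 T) →
      (∀ t ∈ Icc (0:ℝ) T, 0 ≤ s t) → (∀ t ∈ Icc (0:ℝ) T, 0 ≤ i t) →
      s 0 = s₀ → i 0 = i₀ →
      (∀ t ∈ Icc (0:ℝ) T, |s t - s₀| + |i t - i₀| ≤ R) →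
      ∀ S I : ℝ → ℝ → ℝ,
        ContDiffOn ℝ 1 (Function.uncurry S) (Icc 0 xmax ×ˢ Icc 0 T) →
        ContDiffOn ℝ 1 (Function.uncurry I) (Icc 0 xmax ×ˢ Icc 0 T) →
        (∀ x ∈ Icc (0:ℝ) xmax, ∀ t ∈ Icc (0:ℝ) T,
          HasDerivAt (S x) (I x t * (μ - β₀ * S x t) - DS * (S x t - x / m * s t)) t) →
        (∀ x ∈ Icc (0:ℝ) xmax, ∀ t ∈ Icc (0:ℝ) T,
          HasDerivAt (I x) (I x t * (-μ + β₀ * S x t) - DI * (I x t - x / m * i t)) t) →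
        (∀ x ∈ Icc (0:ℝ) xmax, S x 0 = S₀ x) →
        (∀ x ∈ Icc (0:ℝ) xmax, I x 0 = I₀ x) →
        (∀ x ∈ Icc (0:ℝ) xmax, ∀ t ∈ Icc (0:ℝ) T, 0 ≤ S x t ∧ 0 ≤ I x t) →
        (∀ t ∈ Icc (0:ℝ) T,
          0 ≤ ∫ x in (0:ℝ)..xmax, S x t * p x ∧
          0 ≤ ∫ x in (0:ℝ)..xmax, I x t * p x) ∧
        (∫ x in (0:ℝ)..xmax, S x 0 * p x) = s₀ ∧
        (∫ x in (0:ℝ)..xmax, I x 0 * p x) = i₀ ∧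
        ∀ t ∈ Icc (0:ℝ) T,
          |(∫ x in (0:ℝ)..xmax, S x t * p x) - s₀| +
            |(∫ x in (0:ℝ)..xmax, I x t * p x) - i₀| ≤ R := by
  have hmn : 0 < xmax / m := div_pos hxmax hm
  -- p is interval integrable
  have hpInt : IntervalIntegrable p MeasureTheory.volume 0 xmax := by
    by_contra h
    rw [intervalIntegral.integral_undef h] at hp_int
    norm_num at hp_int
  -- bound on initial data
  obtain ⟨x₀, hx₀, hmax⟩ := isCompact_Icc.exists_isMaxOn (nonempty_Icc.2 hxmax.le)
    ((hS₀.continuous.add hI₀.continuous).continuousOn)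
  obtain ⟨M₀, hM₀def⟩ : ∃ M₀ : ℝ, M₀ = max (S₀ x₀ + I₀ x₀) 0 := ⟨_, rfl⟩
  have hM₀ : 0 ≤ M₀ := hM₀def ▸ le_max_right _ _
  obtain ⟨Cd, hCddef⟩ : ∃ Cd : ℝ, Cd = (DS * (s₀ + R) + DI * (i₀ + R)) * (xmax / m) := ⟨_, rfl⟩
  have hCd : 0 ≤ Cd := by rw [hCddef]; positivity
  obtain ⟨M, hMdef⟩ : ∃ M : ℝ, M = M₀ + Cd := ⟨_, rfl⟩
  have hM : 0 ≤ M := by rw [hMdef]; positivity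
  obtain ⟨BS, hBSdef⟩ : ∃ BS : ℝ, BS = M * (μ + β₀ * M) + DS * (M + xmax / m * (s₀ + R)) := ⟨_, rfl⟩
  have hBS : 0 ≤ BS := by rw [hBSdef]; positivity
  obtain ⟨BI, hBIdef⟩ : ∃ BI : ℝ, BI = M * (μ + β₀ * M) + DI * (M + xmax / m * (i₀ + R)) := ⟨_, rfl⟩
  have hBI : 0 ≤ BI := by rw [hBIdef]; positivity
  obtain ⟨B, hBdef⟩ : ∃ B : ℝ, B = BS + BI := ⟨_, rfl⟩
  have hB : 0 ≤ B := by rw [hBdef]; positivity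
  have hRpos : (0:ℝ) < R := lt_of_lt_of_le one_pos hR
  obtain ⟨T, hTdef⟩ : ∃ T : ℝ, T = min 1 (R / (B + 1)) := ⟨_, rfl⟩
  have hTpos : 0 < T := hTdef ▸ lt_min one_pos (div_pos hRpos (by linarith))
  have hT1 : T ≤ 1 := hTdef ▸ min_le_left _ _
  have hBTR : B * T ≤ R := by
    have h1 : B * T ≤ B * (R / (B + 1)) :=
      mul_le_mul_of_nonneg_left (hTdef ▸ min_le_right _ _) hB
    have h2 : B * (R / (B + 1)) = (B / (B + 1)) * R := by ring
    have h3 : B / (B + 1) ≤ 1 := (div_le_one (by linarith)).2 (by linarith)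
    calc B * T ≤ (B / (B + 1)) * R := by rw [← h2]; exact h1
      _ ≤ 1 * R := mul_le_mul_of_nonneg_right h3 hRpos.le
      _ = R := one_mul R
  refine ⟨T, hTpos, ?_⟩
  intro s i hscont hicont hsnn hinn hs0 hi0 hsi S I hSc hIc hSd hId hSinit hIinit hSI
  have h0T : (0:ℝ) ∈ Icc (0:ℝ) T := left_mem_Icc.2 hTpos.le
  -- bounds on s and i
  have hsle : ∀ t ∈ Icc (0:ℝ) T, s t ≤ s₀ + R := by
    intro t ht
    have := hsi t ht
    have h1 : |s t - s₀| ≤ R := by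
      have := abs_nonneg (i t - i₀); linarith
    have := (abs_le.1 h1).2; linarith
  have hile : ∀ t ∈ Icc (0:ℝ) T, i t ≤ i₀ + R := by
    intro t ht
    have := hsi t ht
    have h1 : |i t - i₀| ≤ R := by
      have := abs_nonneg (s t - s₀); linarith
    have := (abs_le.1 h1).2; linarith
  -- a priori bound on S + I
  have hNbound : ∀ x ∈ Icc (0:ℝ) xmax, ∀ t ∈ Icc (0:ℝ) T,
      S x t ≤ M ∧ I x t ≤ M := by
    intro x hx t ht
    have hxm1 : 0 ≤ x / m := div_nonneg hx.1 hm.le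
    have hxm2 : x / m ≤ xmax / m := div_le_div_of_nonneg_right hx.2 hm.le
    have hderiv : ∀ u ∈ Icc (0:ℝ) T, HasDerivAt (fun u => S x u + I x u)
        ((I x u * (μ - β₀ * S x u) - DS * (S x u - x / m * s u)) +
        (I x u * (-μ + β₀ * S x u) - DI * (I x u - x / m * i u))) u := by
      intro u hu
      exact (hSd x hx u hu).add (hId x hx u hu)
    have hbound : ∀ u ∈ Icc (0:ℝ) T,
        (I x u * (μ - β₀ * S x u) - DS * (S x u - x / m * s u)) +
        (I x u * (-μ + β₀ * S x u) - DI * (I x u - x / m * i u)) ≤ Cd := by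
      intro u hu
      have hSnn := (hSI x hx u hu).1
      have hInn := (hSI x hx u hu).2
      have hsu := hsle u hu
      have hiu := hile u hu
      have hsu0 := hsnn u hu
      have hiu0 := hinn u hu
      have p1 : x / m * s u ≤ (xmax / m) * (s₀ + R) :=
        mul_le_mul hxm2 hsu hsu0 hmn.le
      have p2 : x / m * i u ≤ (xmax / m) * (i₀ + R) :=
        mul_le_mul hxm2 hiu hiu0 hmn.le
      have q1 := mul_le_mul_of_nonneg_left p1 hDS.le
      have q2 := mul_le_mul_of_nonneg_left p2 hDI.le
      have q3 : 0 ≤ DS * S x u := mul_nonneg hDS.le hSnn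
      have q4 : 0 ≤ DI * I x u := mul_nonneg hDI.le hInn
      have hrw : (I x u * (μ - β₀ * S x u) - DS * (S x u - x / m * s u)) +
          (I x u * (-μ + β₀ * S x u) - DI * (I x u - x / m * i u))
          = -(DS * S x u) + DS * (x / m * s u) - DI * I x u + DI * (x / m * i u) := by
        ring
      rw [hrw, hCddef]
      have hrw2 : (DS * (s₀ + R) + DI * (i₀ + R)) * (xmax / m)
          = DS * (xmax / m * (s₀ + R)) + DI * (xmax / m * (i₀ + R)) := by ring
      rw [hrw2]
      linarith only [q1, q2, q3, q4]
    have key : S x t + I x t ≤ (S x 0 + I x 0) + Cd * t :=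
      aux_one_sided hderiv hbound t ht
    have hinit : S x 0 + I x 0 ≤ M₀ := by
      rw [hSinit x hx, hIinit x hx, hM₀def]
      exact le_trans (hmax hx) (le_max_left _ _)
    have hCdt : Cd * t ≤ Cd := by
      calc Cd * t ≤ Cd * 1 := mul_le_mul_of_nonneg_left (le_trans ht.2 hT1) hCd
        _ = Cd := mul_one Cd
    have hsum : S x t + I x t ≤ M := by rw [hMdef]; linarith
    exact ⟨by linarith [(hSI x hx t ht).2], by linarith [(hSI x hx t ht).1]⟩
  -- Lipschitz-type bound in time for S
  have hSlip : ∀ x ∈ Icc (0:ℝ) xmax, ∀ t ∈ Icc (0:ℝ) T,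
      |S x t - S₀ x| ≤ BS * t := by
    intro x hx t ht
    have hxm1 : 0 ≤ x / m := div_nonneg hx.1 hm.le
    have hxm2 : x / m ≤ xmax / m := div_le_div_of_nonneg_right hx.2 hm.le
    have hb := Convex.norm_image_sub_le_of_norm_hasDerivWithin_le
      (f := S x)
      (f' := fun u => I x u * (μ - β₀ * S x u) - DS * (S x u - x / m * s u))
      (C := BS)
      (fun u hu => (hSd x hx u hu).hasDerivWithinAt)
      (fun u hu => by
        have hSnn := (hSI x hx u hu).1
        have hInn := (hSI x hx u hu).2
        have hSle := (hNbound x hx u hu).1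
        have hIle := (hNbound x hx u hu).2
        have hsu := hsle u hu
        have hsu0 := hsnn u hu
        have p1 : x / m * s u ≤ (xmax / m) * (s₀ + R) :=
          mul_le_mul hxm2 hsu hsu0 hmn.le
        have p2 : I x u * S x u ≤ M * M := mul_le_mul hIle hSle hSnn hM
        have p3 : I x u * μ ≤ M * μ := mul_le_mul_of_nonneg_right hIle hμ.le
        have q1 : I x u * μ ≤ M * μ := mul_le_mul_of_nonneg_right hIle hμ.le
        have q1' : 0 ≤ I x u * μ := mul_nonneg hInn hμ.le
        have q2 : β₀ * (I x u * S x u) ≤ β₀ * (M * M) := mul_le_mul_of_nonneg_left p2 hβ₀.le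
        have q2' : 0 ≤ β₀ * (I x u * S x u) := mul_nonneg hβ₀.le (mul_nonneg hInn hSnn)
        have q3 : DS * S x u ≤ DS * M := mul_le_mul_of_nonneg_left hSle hDS.le
        have q3' : 0 ≤ DS * S x u := mul_nonneg hDS.le hSnn
        have q4 : DS * (x / m * s u) ≤ DS * (xmax / m * (s₀ + R)) :=
          mul_le_mul_of_nonneg_left p1 hDS.le
        have q4' : 0 ≤ DS * (x / m * s u) := mul_nonneg hDS.le (mul_nonneg hxm1 hsu0)
        have r1 : 0 ≤ M * μ := mul_nonneg hM hμ.le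
        have r2 : 0 ≤ DS * (xmax / m * (s₀ + R)) :=
          mul_nonneg hDS.le (mul_nonneg hmn.le (by linarith))
        have r3 : 0 ≤ β₀ * (M * M) := mul_nonneg hβ₀.le (mul_nonneg hM hM)
        show ‖I x u * (μ - β₀ * S x u) - DS * (S x u - x / m * s u)‖ ≤ BS
        rw [Real.norm_eq_abs, abs_le, hBSdef]
        constructor
        · linarith only [q1, q1', q2, q2', q3, q3', q4, q4', r1, r2, r3]
        · linarith only [q1, q1', q2, q2', q3, q3', q4, q4', r1, r2, r3])
      (convex_Icc 0 T) h0T ht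
    rw [Real.norm_eq_abs, Real.norm_eq_abs, sub_zero, abs_of_nonneg ht.1,
      hSinit x hx] at hb
    exact hb
  -- Lipschitz-type bound in time for I
  have hIlip : ∀ x ∈ Icc (0:ℝ) xmax, ∀ t ∈ Icc (0:ℝ) T,
      |I x t - I₀ x| ≤ BI * t := by
    intro x hx t ht
    have hxm1 : 0 ≤ x / m := div_nonneg hx.1 hm.le
    have hxm2 : x / m ≤ xmax / m := div_le_div_of_nonneg_right hx.2 hm.le
    have hb := Convex.norm_image_sub_le_of_norm_hasDerivWithin_le
      (f := I x)
      (f' := fun u => I x u * (-μ + β₀ * S x u) - DI * (I x u - x / m * i u))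
      (C := BI)
      (fun u hu => (hId x hx u hu).hasDerivWithinAt)
      (fun u hu => by
        have hSnn := (hSI x hx u hu).1
        have hInn := (hSI x hx u hu).2
        have hSle := (hNbound x hx u hu).1
        have hIle := (hNbound x hx u hu).2
        have hiu := hile u hu
        have hiu0 := hinn u hu
        have p1 : x / m * i u ≤ (xmax / m) * (i₀ + R) :=
          mul_le_mul hxm2 hiu hiu0 hmn.le
        have p2 : I x u * S x u ≤ M * M := mul_le_mul hIle hSle hSnn hM
        have p3 : I x u * μ ≤ M * μ := mul_le_mul_of_nonneg_right hIle hμ.le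
        have q1 : I x u * μ ≤ M * μ := mul_le_mul_of_nonneg_right hIle hμ.le
        have q1' : 0 ≤ I x u * μ := mul_nonneg hInn hμ.le
        have q2 : β₀ * (I x u * S x u) ≤ β₀ * (M * M) := mul_le_mul_of_nonneg_left p2 hβ₀.le
        have q2' : 0 ≤ β₀ * (I x u * S x u) := mul_nonneg hβ₀.le (mul_nonneg hInn hSnn)
        have q3 : DI * I x u ≤ DI * M := mul_le_mul_of_nonneg_left hIle hDI.le
        have q3' : 0 ≤ DI * I x u := mul_nonneg hDI.le hInn
        have q4 : DI * (x / m * i u) ≤ DI * (xmax / m * (i₀ + R)) :=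
          mul_le_mul_of_nonneg_left p1 hDI.le
        have q4' : 0 ≤ DI * (x / m * i u) := mul_nonneg hDI.le (mul_nonneg hxm1 hiu0)
        have r1 : 0 ≤ M * μ := mul_nonneg hM hμ.le
        have r2 : 0 ≤ DI * (xmax / m * (i₀ + R)) :=
          mul_nonneg hDI.le (mul_nonneg hmn.le (by linarith))
        have r3 : 0 ≤ β₀ * (M * M) := mul_nonneg hβ₀.le (mul_nonneg hM hM)
        show ‖I x u * (-μ + β₀ * S x u) - DI * (I x u - x / m * i u)‖ ≤ BI
        rw [Real.norm_eq_abs, abs_le, hBIdef]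
        constructor
        · linarith only [q1, q1', q2, q2', q3, q3', q4, q4', r1, r2, r3]
        · linarith only [q1, q1', q2, q2', q3, q3', q4, q4', r1, r2, r3])
      (convex_Icc 0 T) h0T ht
    rw [Real.norm_eq_abs, Real.norm_eq_abs, sub_zero, abs_of_nonneg ht.1,
      hIinit x hx] at hb
    exact hb
  -- continuity in x of slices
  have hSslice : ∀ t ∈ Icc (0:ℝ) T, ContinuousOn (fun x => S x t) (Icc 0 xmax) := by
    intro t ht
    have h1 : ContinuousOn (Function.uncurry S) (Icc 0 xmax ×ˢ Icc 0 T) := hSc.continuousOn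
    exact h1.comp (continuous_id.prodMk continuous_const).continuousOn
      (fun x hx => mem_prod.2 ⟨hx, ht⟩)
  have hIslice : ∀ t ∈ Icc (0:ℝ) T, ContinuousOn (fun x => I x t) (Icc 0 xmax) := by
    intro t ht
    have h1 : ContinuousOn (Function.uncurry I) (Icc 0 xmax ×ˢ Icc 0 T) := hIc.continuousOn
    exact h1.comp (continuous_id.prodMk continuous_const).continuousOn
      (fun x hx => mem_prod.2 ⟨hx, ht⟩)
  have huIcc : uIcc (0:ℝ) xmax = Icc 0 xmax := uIcc_of_le hxmax.le
  have hSint : ∀ t ∈ Icc (0:ℝ) T,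
      IntervalIntegrable (fun x => S x t * p x) MeasureTheory.volume 0 xmax := by
    intro t ht
    exact hpInt.continuousOn_mul (by rw [huIcc]; exact hSslice t ht)
  have hIint : ∀ t ∈ Icc (0:ℝ) T,
      IntervalIntegrable (fun x => I x t * p x) MeasureTheory.volume 0 xmax := by
    intro t ht
    exact hpInt.continuousOn_mul (by rw [huIcc]; exact hIslice t ht)
  have hS₀int : IntervalIntegrable (fun x => S₀ x * p x) MeasureTheory.volume 0 xmax :=
    hpInt.continuousOn_mul hS₀.continuous.continuousOn
  have hI₀int : IntervalIntegrable (fun x => I₀ x * p x) MeasureTheory.volume 0 xmax :=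
    hpInt.continuousOn_mul hI₀.continuous.continuousOn
  -- the average bound
  have habsS : ∀ t ∈ Icc (0:ℝ) T,
      |(∫ x in (0:ℝ)..xmax, S x t * p x) - s₀| ≤ BS * t := by
    intro t ht
    have heq : (∫ x in (0:ℝ)..xmax, S x t * p x) - s₀
        = ∫ x in (0:ℝ)..xmax, (S x t - S₀ x) * p x := by
      rw [hs₀, ← intervalIntegral.integral_sub (hSint t ht) hS₀int]
      congr 1; funext x; ring
    rw [heq]
    have h1 : |∫ x in (0:ℝ)..xmax, (S x t - S₀ x) * p x|
        ≤ ∫ x in (0:ℝ)..xmax, |(S x t - S₀ x) * p x| :=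
      intervalIntegral.abs_integral_le_integral_abs hxmax.le
    have h2 : (∫ x in (0:ℝ)..xmax, |(S x t - S₀ x) * p x|)
        ≤ ∫ x in (0:ℝ)..xmax, (BS * t) * p x := by
      have hint1 : IntervalIntegrable (fun x => |(S x t - S₀ x) * p x|)
          MeasureTheory.volume 0 xmax := by
        have h := ((hSint t ht).sub hS₀int).abs
        simpa [sub_mul] using h
      apply intervalIntegral.integral_mono_on hxmax.le hint1 (hpInt.const_mul (BS * t))
      intro x hx
      rw [abs_mul, abs_of_nonneg (hp_nonneg x hx)]
      exact mul_le_mul_of_nonneg_right (hSlip x hx t ht) (hp_nonneg x hx)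
    have h3 : (∫ x in (0:ℝ)..xmax, (BS * t) * p x) = BS * t := by
      rw [intervalIntegral.integral_const_mul, hp_int, mul_one]
    calc |∫ x in (0:ℝ)..xmax, (S x t - S₀ x) * p x|
        ≤ ∫ x in (0:ℝ)..xmax, |(S x t - S₀ x) * p x| := h1
      _ ≤ ∫ x in (0:ℝ)..xmax, (BS * t) * p x := h2
      _ = BS * t := h3
  have habsI : ∀ t ∈ Icc (0:ℝ) T,
      |(∫ x in (0:ℝ)..xmax, I x t * p x) - i₀| ≤ BI * t := by
    intro t ht
    have heq : (∫ x in (0:ℝ)..xmax, I x t * p x) - i₀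
        = ∫ x in (0:ℝ)..xmax, (I x t - I₀ x) * p x := by
      rw [hi₀, ← intervalIntegral.integral_sub (hIint t ht) hI₀int]
      congr 1; funext x; ring
    rw [heq]
    have h1 : |∫ x in (0:ℝ)..xmax, (I x t - I₀ x) * p x|
        ≤ ∫ x in (0:ℝ)..xmax, |(I x t - I₀ x) * p x| :=
      intervalIntegral.abs_integral_le_integral_abs hxmax.le
    have h2 : (∫ x in (0:ℝ)..xmax, |(I x t - I₀ x) * p x|)
        ≤ ∫ x in (0:ℝ)..xmax, (BI * t) * p x := by
      have hint1 : IntervalIntegrable (fun x => |(I x t - I₀ x) * p x|)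
          MeasureTheory.volume 0 xmax := by
        have h := ((hIint t ht).sub hI₀int).abs
        simpa [sub_mul] using h
      apply intervalIntegral.integral_mono_on hxmax.le hint1 (hpInt.const_mul (BI * t))
      intro x hx
      rw [abs_mul, abs_of_nonneg (hp_nonneg x hx)]
      exact mul_le_mul_of_nonneg_right (hIlip x hx t ht) (hp_nonneg x hx)
    have h3 : (∫ x in (0:ℝ)..xmax, (BI * t) * p x) = BI * t := by
      rw [intervalIntegral.integral_const_mul, hp_int, mul_one]
    calc |∫ x in (0:ℝ)..xmax, (I x t - I₀ x) * p x|
        ≤ ∫ x in (0:ℝ)..xmax, |(I x t - I₀ x) * p x| := h1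
      _ ≤ ∫ x in (0:ℝ)..xmax, (BI * t) * p x := h2
      _ = BI * t := h3
  refine ⟨?_, ?_, ?_, ?_⟩
  · intro t ht
    constructor
    · apply intervalIntegral.integral_nonneg hxmax.le
      intro x hx
      exact mul_nonneg (hSI x hx t ht).1 (hp_nonneg x hx)
    · apply intervalIntegral.integral_nonneg hxmax.le
      intro x hx
      exact mul_nonneg (hSI x hx t ht).2 (hp_nonneg x hx)
  · rw [hs₀]
    apply intervalIntegral.integral_congr
    intro x hx
    rw [huIcc] at hx
    show S x 0 * p x = S₀ x * p x
    rw [hSinit x hx]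
  · rw [hi₀]
    apply intervalIntegral.integral_congr
    intro x hx
    rw [huIcc] at hx
    show I x 0 * p x = I₀ x * p x
    rw [hIinit x hx]
  · intro t ht
    have h1 := habsS t ht
    have h2 := habsI t ht
    have h3 : BS * t + BI * t ≤ B * T := by
      have h4 : (BS + BI) * t ≤ (BS + BI) * T :=
        mul_le_mul_of_nonneg_left ht.2 (hBdef ▸ hB)
      rw [hBdef]; linarith
    linarith
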